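/- arXiv:2411.00779 — 4 statements merged into one kernel-verified Lean document; each statement's English description precedes it below -/
import Mathlib

section
/- Let n ≥ 2 and let P ⊂ ℝⁿ be a polytope (the convex hull of finitely many points) containing the origin in its interior. Call v ∈ S^{n-1} an outer facet normal of P if the face F(P,v) = {y ∈ P : ⟨y,v⟩ = h_P(v)} satisfies H^{n-1}(F(P,v)) > 0. If η ⊆ S^{n-1} is a Borel set containing no outer facet normal of P, then the reverse radial Gauss image α*_P(η) has spherical Lebesgue measure zero: σ(α*_P(η)) = 0. -/
open MeasureTheory Metric Filter
open scoped InnerProductSpace ENNReal Topology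

/-- The support function of a set `K`: `h_K(x) = sup_{y ∈ K} ⟪x, y⟫`. -/
noncomputable def suppFn {n : ℕ} (K : Set (EuclideanSpace ℝ (Fin n)))
    (x : EuclideanSpace ℝ (Fin n)) : ℝ :=
  sSup ((fun y => ⟪x, y⟫_ℝ) '' K)

/-- The radial function of a set `K`: `ρ_K(v) = max {c > 0 : c • v ∈ K}`. -/
noncomputable def radFn {n : ℕ} (K : Set (EuclideanSpace ℝ (Fin n)))
    (v : EuclideanSpace ℝ (Fin n)) : ℝ :=
  sSup {c : ℝ | 0 < c ∧ c • v ∈ K}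


/-- The spherical Lebesgue measure `σ` on `S^{n-1}`. -/
noncomputable def sphLeb (n : ℕ) : Measure (EuclideanSpace ℝ (Fin n)) :=
  (μH[(n : ℝ) - 1]).restrict (sphere (0 : EuclideanSpace ℝ (Fin n)) 1)

/-- The reverse radial Gauss image of `η ⊆ S^{n-1}` with respect to `Ω`. -/
def revRadGauss {n : ℕ} (Ω η : Set (EuclideanSpace ℝ (Fin n))) :
    Set (EuclideanSpace ℝ (Fin n)) :=
  {v | v ∈ sphere (0 : EuclideanSpace ℝ (Fin n)) 1 ∧
    ∃ ξ ∈ η, radFn Ω v * ⟪v, ξ⟫_ℝ = suppFn Ω ξ}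

/-- The radial normalization map is Lipschitz on the complement of a ball. -/
lemma normalize_lipschitzOnWith {E : Type*} [NormedAddCommGroup E] [NormedSpace ℝ E]
    {r : ℝ} (hr : 0 < r) :
    LipschitzOnWith (Real.toNNReal (2 / r)) (fun x : E => ‖x‖⁻¹ • x) {x : E | r ≤ ‖x‖} := by
  rw [lipschitzOnWith_iff_dist_le_mul]
  intro x hx y hy
  simp only [Set.mem_setOf_eq] at hx hy
  have hx0 : 0 < ‖x‖ := hr.trans_le hx
  have hy0 : 0 < ‖y‖ := hr.trans_le hy
  have hK : (Real.toNNReal (2 / r) : ℝ) = 2 / r := Real.coe_toNNReal _ (by positivity)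
  rw [dist_eq_norm, dist_eq_norm, hK]
  have hdecomp : ‖x‖⁻¹ • x - ‖y‖⁻¹ • y = ‖x‖⁻¹ • (x - y) + (‖x‖⁻¹ - ‖y‖⁻¹) • y := by
    rw [smul_sub, sub_smul]; abel
  rw [hdecomp]
  have h1 : ‖‖x‖⁻¹ • (x - y)‖ ≤ r⁻¹ * ‖x - y‖ := by
    rw [norm_smul, norm_inv, norm_norm]
    gcongr
  have h3 : |‖y‖ - ‖x‖| ≤ ‖x - y‖ := by
    rw [abs_sub_comm]; exact abs_norm_sub_norm_le x y
  have h2 : ‖(‖x‖⁻¹ - ‖y‖⁻¹) • y‖ ≤ r⁻¹ * ‖x - y‖ := by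
    rw [norm_smul, Real.norm_eq_abs]
    have hdiff : ‖x‖⁻¹ - ‖y‖⁻¹ = (‖y‖ - ‖x‖) / (‖x‖ * ‖y‖) := by
      field_simp
    have e : |‖x‖⁻¹ - ‖y‖⁻¹| * ‖y‖ = |‖y‖ - ‖x‖| / ‖x‖ := by
      rw [hdiff, abs_div, abs_of_pos (mul_pos hx0 hy0)]
      field_simp
    rw [e]
    calc |‖y‖ - ‖x‖| / ‖x‖ ≤ ‖x - y‖ / ‖x‖ := by gcongr
      _ ≤ ‖x - y‖ / r := by gcongr
      _ = r⁻¹ * ‖x - y‖ := by ring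
  calc ‖‖x‖⁻¹ • (x - y) + (‖x‖⁻¹ - ‖y‖⁻¹) • y‖
      ≤ ‖‖x‖⁻¹ • (x - y)‖ + ‖(‖x‖⁻¹ - ‖y‖⁻¹) • y‖ := norm_add_le _ _
    _ ≤ r⁻¹ * ‖x - y‖ + r⁻¹ * ‖x - y‖ := add_le_add h1 h2
    _ = 2 / r * ‖x - y‖ := by ring

/-- If a Borel set `η ⊆ S^{n-1}` contains no outer facet normal of a polytope `P` containing
the origin in its interior, then the reverse radial Gauss image `α*_P(η)` has spherical
Lebesgue measure zero. -/
theorem stmt11 (n : ℕ) (hn : 2 ≤ n)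
    (S : Finset (EuclideanSpace ℝ (Fin n)))
    (P : Set (EuclideanSpace ℝ (Fin n))) (hP : P = convexHull ℝ (S : Set (EuclideanSpace ℝ (Fin n))))
    (hP0 : (0 : EuclideanSpace ℝ (Fin n)) ∈ interior P)
    (η : Set (EuclideanSpace ℝ (Fin n))) (hη_meas : MeasurableSet η)
    (hη_sub : η ⊆ sphere (0 : EuclideanSpace ℝ (Fin n)) 1)
    (hη_nofacet : ∀ v ∈ η,
      ¬ 0 < μH[(n : ℝ) - 1] {y : EuclideanSpace ℝ (Fin n) | y ∈ P ∧ ⟪y, v⟫_ℝ = suppFn P v}) :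
    sphLeb n (revRadGauss P η) = 0 := by
  classical
  have hd0 : (0 : ℝ) ≤ (n : ℝ) - 1 := by
    have h2 : (2 : ℝ) ≤ (n : ℝ) := by exact_mod_cast hn
    linarith
  -- basic facts about P
  have hPc : IsCompact P := by rw [hP]; exact S.finite_toSet.isCompact_convexHull (𝕜 := ℝ)
  have hPconv : Convex ℝ P := by rw [hP]; exact convex_convexHull ℝ _
  have hPcl : IsClosed P := hPc.isClosed
  obtain ⟨R, hR⟩ : ∃ R, P ⊆ closedBall (0 : EuclideanSpace ℝ (Fin n)) R :=
    (isBounded_iff_subset_closedBall 0).1 hPc.isBounded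
  obtain ⟨ε, hε0, hball⟩ := Metric.mem_nhds_iff.mp (mem_interior_iff_mem_nhds.mp hP0)
  set r : ℝ := ε / 2 with hrdef
  have hr0 : 0 < r := by positivity
  have hrP : closedBall (0 : EuclideanSpace ℝ (Fin n)) r ⊆ P :=
    (closedBall_subset_ball (by rw [hrdef]; linarith)).trans hball
  -- support function upper bound
  have hsupp_ub : ∀ ξ : EuclideanSpace ℝ (Fin n), ∀ y ∈ P, ⟪ξ, y⟫_ℝ ≤ suppFn P ξ := by
    intro ξ y hy
    have hbdd : BddAbove ((fun y => ⟪ξ, y⟫_ℝ) '' P) :=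
      (hPc.image (continuous_const.inner continuous_id)).bddAbove
    exact le_csSup hbdd ⟨y, hy, rfl⟩
  -- radial function attains its value
  have hrad : ∀ u : EuclideanSpace ℝ (Fin n), ‖u‖ = 1 →
      radFn P u • u ∈ P ∧ r ≤ radFn P u := by
    intro u hu
    have hru : r • u ∈ P := by
      apply hrP
      rw [mem_closedBall_zero_iff, norm_smul, hu, mul_one, Real.norm_eq_abs,
        abs_of_pos hr0]
    set C := {c : ℝ | 0 < c ∧ c • u ∈ P} with hC
    set C' := {c : ℝ | r ≤ c ∧ c • u ∈ P} with hC'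
    have hC'sub : C' ⊆ C := fun c hc => ⟨hr0.trans_le hc.1, hc.2⟩
    have hrC' : r ∈ C' := ⟨le_refl r, hru⟩
    have hbddC : BddAbove C := by
      refine ⟨R, fun c hc => ?_⟩
      have hcb := hR hc.2
      rw [mem_closedBall_zero_iff, norm_smul, hu, mul_one, Real.norm_eq_abs] at hcb
      exact (le_abs_self c).trans hcb
    have hbddC' : BddAbove C' := hbddC.mono hC'sub
    have hC'closed : IsClosed C' := by
      have : C' = Set.Ici r ∩ ((fun c : ℝ => c • u) ⁻¹' P) := rfl
      rw [this]
      exact isClosed_Ici.inter (hPcl.preimage (continuous_id.smul continuous_const))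
    have hmem := hC'closed.csSup_mem ⟨r, hrC'⟩ hbddC'
    have hCdef : radFn P u = sSup C := rfl
    have hsup_eq : radFn P u = sSup C' := by
      rw [hCdef]
      have hCne : C.Nonempty := ⟨r, hr0, hru⟩
      apply le_antisymm
      · apply csSup_le hCne
        intro c hc
        rcases le_total c r with h | h
        · exact h.trans (le_csSup hbddC' hrC')
        · exact le_csSup hbddC' ⟨h, hc.2⟩
      · exact csSup_le_csSup hbddC ⟨r, hrC'⟩ hC'sub
    rw [hsup_eq]
    exact ⟨hmem.2, hmem.1⟩
  -- Claim A: maximizers lie in the convex hull of the maximizing vertices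
  have claimA : ∀ ξ : EuclideanSpace ℝ (Fin n), ∀ x ∈ P, ⟪ξ, x⟫_ℝ = suppFn P ξ →
      ∃ T ∈ S.powerset, x ∈ convexHull ℝ (T : Set (EuclideanSpace ℝ (Fin n))) ∧
        convexHull ℝ (T : Set (EuclideanSpace ℝ (Fin n))) ⊆
          {y : EuclideanSpace ℝ (Fin n) | y ∈ P ∧ ⟪y, ξ⟫_ℝ = suppFn P ξ} := by
    intro ξ x hxP hxsup
    have hx' : x ∈ convexHull ℝ (S : Set (EuclideanSpace ℝ (Fin n))) := hP ▸ hxP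
    rw [Finset.convexHull_eq] at hx'
    obtain ⟨w, hw0, hw1, hwx⟩ := hx'
    have hcm : S.centerMass w id = ∑ s ∈ S, w s • s := by
      rw [Finset.centerMass_eq_of_sum_1 _ _ hw1]
      rfl
    have hinner : ⟪ξ, x⟫_ℝ = ∑ s ∈ S, w s * ⟪ξ, s⟫_ℝ := by
      rw [← hwx, hcm, inner_sum]
      exact Finset.sum_congr rfl fun s _ => real_inner_smul_right _ _ _
    have hSP : ∀ s ∈ S, s ∈ P := fun s hs => by
      rw [hP]; exact subset_convexHull ℝ _ hs
    have hzero : ∑ s ∈ S, w s * (suppFn P ξ - ⟪ξ, s⟫_ℝ) = 0 := by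
      have hexp : ∑ s ∈ S, w s * (suppFn P ξ - ⟪ξ, s⟫_ℝ) =
          (∑ s ∈ S, w s) * suppFn P ξ - ∑ s ∈ S, w s * ⟪ξ, s⟫_ℝ := by
        rw [Finset.sum_mul, ← Finset.sum_sub_distrib]
        exact Finset.sum_congr rfl fun s _ => by ring
      rw [hexp, hw1, one_mul, ← hinner, hxsup, sub_self]
    have hterm : ∀ s ∈ S, w s * (suppFn P ξ - ⟪ξ, s⟫_ℝ) = 0 :=
      (Finset.sum_eq_zero_iff_of_nonneg (fun s hs =>
        mul_nonneg (hw0 s hs) (sub_nonneg.2 (hsupp_ub ξ s (hSP s hs))))).1 hzero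
    set T := S.filter (fun s => w s ≠ 0) with hT
    refine ⟨T, Finset.mem_powerset.2 (Finset.filter_subset _ _), ?_, ?_⟩
    · have hsumT : ∑ s ∈ T, w s = 1 := by
        rw [hT, Finset.sum_filter_ne_zero, hw1]
      rw [← hwx, ← Finset.centerMass_filter_ne_zero (z := id)]
      exact Finset.centerMass_mem_convexHull _
        (fun i hi => hw0 i (Finset.mem_filter.1 hi).1)
        (by rw [show (S.filter fun i => w i ≠ 0) = T from rfl, hsumT]; norm_num)
        (fun i hi => Finset.mem_coe.2 hi)
    · have hTsup : ∀ s ∈ T, ⟪ξ, s⟫_ℝ = suppFn P ξ := by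
        intro s hs
        obtain ⟨hsS, hws⟩ := Finset.mem_filter.1 hs
        rcases mul_eq_zero.1 (hterm s hsS) with h1 | h1
        · exact absurd h1 hws
        · linarith [sub_eq_zero.1 h1]
      apply convexHull_min
      · intro s hs
        refine ⟨hSP s (Finset.filter_subset _ _ hs), ?_⟩
        rw [real_inner_comm]
        exact hTsup s hs
      · have hlin : IsLinearMap ℝ (fun y : EuclideanSpace ℝ (Fin n) => ⟪y, ξ⟫_ℝ) :=
          ⟨fun a b => inner_add_left a b ξ, fun c a => real_inner_smul_left a ξ c⟩
        exact hPconv.inter (convex_hyperplane hlin (suppFn P ξ))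
  -- the finite family of bad sets
  set f : EuclideanSpace ℝ (Fin n) → EuclideanSpace ℝ (Fin n) := fun x => ‖x‖⁻¹ • x with hfdef
  set A := {x : EuclideanSpace ℝ (Fin n) | r ≤ ‖x‖} with hA
  set 𝒯 := S.powerset.filter
    (fun T : Finset (EuclideanSpace ℝ (Fin n)) =>
      μH[(n : ℝ) - 1] (convexHull ℝ (↑T : Set (EuclideanSpace ℝ (Fin n)))) = 0) with h𝒯
  have hincl : revRadGauss P η ⊆
      ⋃ (T : Finset (EuclideanSpace ℝ (Fin n))) (_ : T ∈ 𝒯), f '' (convexHull ℝ (T : Set (EuclideanSpace ℝ (Fin n))) ∩ A) := by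
    rintro u ⟨husph, ξ, hξη, heq⟩
    have hu : ‖u‖ = 1 := mem_sphere_zero_iff_norm.1 husph
    obtain ⟨hxP, hrρ⟩ := hrad u hu
    set ρ := radFn P u with hρ
    have hρ0 : 0 < ρ := hr0.trans_le hrρ
    set x := ρ • u with hx
    have hxξ : ⟪ξ, x⟫_ℝ = suppFn P ξ := by
      rw [real_inner_comm, hx, real_inner_smul_left, heq]
    obtain ⟨T, hTpow, hxT, hTsub⟩ := claimA ξ x hxP hxξ
    have hface0 : μH[(n : ℝ) - 1]
        {y : EuclideanSpace ℝ (Fin n) | y ∈ P ∧ ⟪y, ξ⟫_ℝ = suppFn P ξ} = 0 :=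
      le_antisymm (not_lt.1 (hη_nofacet ξ hξη)) zero_le
    have hTnull : μH[(n : ℝ) - 1]
        (convexHull ℝ (T : Set (EuclideanSpace ℝ (Fin n)))) = 0 :=
      le_antisymm ((measure_mono hTsub).trans_eq hface0) zero_le
    have hxnorm : ‖x‖ = ρ := by
      rw [hx, norm_smul, hu, mul_one, Real.norm_eq_abs, abs_of_pos hρ0]
    refine Set.mem_biUnion (Finset.mem_filter.2 ⟨hTpow, hTnull⟩) ⟨x, ⟨hxT, ?_⟩, ?_⟩
    · show r ≤ ‖x‖
      rw [hxnorm]; exact hrρ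
    · show ‖x‖⁻¹ • x = u
      rw [hxnorm, hx, smul_smul, inv_mul_cancel₀ hρ0.ne', one_smul]
  -- Lipschitz bound kills each piece
  have hlip := normalize_lipschitzOnWith (E := EuclideanSpace ℝ (Fin n)) hr0
  have hpiece : ∀ T ∈ 𝒯,
      μH[(n : ℝ) - 1] (f '' (convexHull ℝ (T : Set (EuclideanSpace ℝ (Fin n))) ∩ A)) = 0 := by
    intro T hTmem
    have hTnull := (Finset.mem_filter.1 hTmem).2
    have h1 : μH[(n : ℝ) - 1]
        (convexHull ℝ (T : Set (EuclideanSpace ℝ (Fin n))) ∩ A) = 0 :=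
      le_antisymm ((measure_mono Set.inter_subset_left).trans_eq hTnull) zero_le
    have h2 := (hlip.mono (show convexHull ℝ (↑T : Set (EuclideanSpace ℝ (Fin n))) ∩ A ⊆ A from
      Set.inter_subset_right)).hausdorffMeasure_image_le hd0
    rw [h1, mul_zero] at h2
    exact le_antisymm h2 zero_le
  have hunion : μH[(n : ℝ) - 1]
      (⋃ (T : Finset (EuclideanSpace ℝ (Fin n))) (_ : T ∈ 𝒯), f '' (convexHull ℝ (T : Set (EuclideanSpace ℝ (Fin n))) ∩ A)) = 0 := by
    refine le_antisymm ?_ zero_le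
    calc μH[(n : ℝ) - 1] (⋃ (T : Finset (EuclideanSpace ℝ (Fin n))) (_ : T ∈ 𝒯), f '' (convexHull ℝ (T : Set (EuclideanSpace ℝ (Fin n))) ∩ A))
        ≤ ∑ T ∈ 𝒯, μH[(n : ℝ) - 1] (f '' (convexHull ℝ (T : Set (EuclideanSpace ℝ (Fin n))) ∩ A)) :=
          measure_biUnion_finset_le _ _
      _ = 0 := Finset.sum_eq_zero hpiece
  refine le_antisymm ?_ zero_le
  calc sphLeb n (revRadGauss P η)
      ≤ μH[(n : ℝ) - 1] (revRadGauss P η) :=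
        Measure.le_iff'.1 Measure.restrict_le_self _
    _ ≤ μH[(n : ℝ) - 1] (⋃ (T : Finset (EuclideanSpace ℝ (Fin n))) (_ : T ∈ 𝒯), f '' (convexHull ℝ (T : Set (EuclideanSpace ℝ (Fin n))) ∩ A)) :=
        measure_mono hincl
    _ = 0 := hunion
end

section
/- Let n ≥ 2 and let f : S^{n-1} → (0,∞) be continuous. Let [f] = {y ∈ ℝⁿ : ⟨y,v⟩ ≤ f(v) for all v ∈ S^{n-1}} be the Wulff shape of f. Then the polar body of [f] equals the convex hull of the reciprocal radial points of f: {z ∈ ℝⁿ : ⟨z,y⟩ ≤ 1 for all y ∈ [f]} = conv{f(v)^{-1} v : v ∈ S^{n-1}}. -/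
open MeasureTheory Metric Filter
open scoped InnerProductSpace ENNReal Topology

open Module in
/-- The convex hull of a nonempty compact subset of Euclidean space is compact. -/
lemma isCompact_convexHull_aux {n : ℕ} {A : Set (EuclideanSpace ℝ (Fin n))}
    (hA : IsCompact A) (hne : A.Nonempty) : IsCompact (convexHull ℝ A) := by
  classical
  obtain ⟨a₀, ha₀⟩ := hne
  set m := n + 1 with hm
  set T : (Fin m → ℝ) × (Fin m → EuclideanSpace ℝ (Fin n)) → EuclideanSpace ℝ (Fin n) :=
    fun p => ∑ i, p.1 i • p.2 i with hT
  have hTc : Continuous T := by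
    apply continuous_finset_sum
    intro i _
    exact ((continuous_apply i).comp continuous_fst).smul
      ((continuous_apply i).comp continuous_snd)
  have hcpt : IsCompact ((stdSimplex ℝ (Fin m)) ×ˢ (Set.univ.pi fun _ : Fin m => A)) :=
    (isCompact_stdSimplex ..).prod (isCompact_univ_pi fun _ => hA)
  have himg : convexHull ℝ A
      = T '' ((stdSimplex ℝ (Fin m)) ×ˢ (Set.univ.pi fun _ : Fin m => A)) := by
    apply Set.Subset.antisymm
    · intro x hx
      obtain ⟨ι, hι, z, w, hrange, hindep, hwpos, hwsum, hsum⟩ :=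
        eq_pos_convex_span_of_mem_convexHull hx
      have hcard : Fintype.card ι ≤ m := by
        have h1 := hindep.card_le_finrank_succ
        have h2 : finrank ℝ (vectorSpan ℝ (Set.range z)) ≤ n := by
          have := Submodule.finrank_le (vectorSpan ℝ (Set.range z))
          simpa [finrank_euclideanSpace_fin] using this
        omega
      obtain ⟨e⟩ : Nonempty (ι ↪ Fin m) :=
        Function.Embedding.nonempty_of_card_le (by simpa using hcard)
      set W : Fin m → ℝ := Function.extend e w (fun _ => 0) with hW
      set Z : Fin m → EuclideanSpace ℝ (Fin n) := Function.extend e z (fun _ => a₀) with hZ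
      have hWe : ∀ i, W (e i) = w i := fun i => Function.Injective.extend_apply e.injective _ _ _
      have hZe : ∀ i, Z (e i) = z i := fun i => Function.Injective.extend_apply e.injective _ _ _
      have hWo : ∀ j, j ∉ Finset.univ.map e → W j = 0 := by
        intro j hj
        rw [hW, Function.extend_apply']
        rintro ⟨i, rfl⟩
        exact hj (Finset.mem_map_of_mem e (Finset.mem_univ i))
      have hWnn : ∀ j, 0 ≤ W j := by
        intro j
        by_cases hj : ∃ i, e i = j
        · obtain ⟨i, rfl⟩ := hj
          rw [hWe]
          exact (hwpos i).le
        · rw [hW, Function.extend_apply' _ _ _ hj]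
      have hWs : ∑ j, W j = 1 := by
        have hWsum : ∑ j, W j = ∑ i, W (e i) := by
          rw [← Finset.sum_map Finset.univ e W]
          exact (Finset.sum_subset (Finset.subset_univ _)
            (fun j _ hj => hWo j hj)).symm
        rw [hWsum]
        simp only [hWe]
        exact hwsum
      have hZA : ∀ j, Z j ∈ A := by
        intro j
        by_cases hj : ∃ i, e i = j
        · obtain ⟨i, rfl⟩ := hj
          rw [hZe]
          exact hrange (Set.mem_range_self i)
        · rw [hZ, Function.extend_apply' _ _ _ hj]
          exact ha₀
      have hTWZ : ∑ j, W j • Z j = x := by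
        have hkey : ∑ j, W j • Z j = ∑ i, W (e i) • Z (e i) := by
          rw [← Finset.sum_map Finset.univ e (fun j => W j • Z j)]
          refine (Finset.sum_subset (Finset.subset_univ _) ?_).symm
          intro j _ hj
          rw [hWo j hj, zero_smul]
        rw [hkey]
        simp only [hWe, hZe]
        exact hsum
      exact ⟨(W, Z), ⟨⟨hWnn, hWs⟩, fun j _ => hZA j⟩, hTWZ⟩
    · rintro _ ⟨⟨w, z⟩, ⟨⟨hw0, hw1⟩, hz⟩, rfl⟩
      exact (convex_convexHull ℝ A).sum_mem (fun i _ => hw0 i) hw1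
        (fun i _ => subset_convexHull ℝ A (hz i (Set.mem_univ i)))
  rw [himg]
  exact hcpt.image hTc

/-- The polar body of the Wulff shape `[f]` of a positive continuous function `f` on the unit
sphere equals the convex hull of the points `f(v)⁻¹ • v`, `v ∈ S^{n-1}`. -/
theorem stmt12 (n : ℕ) (hn : 2 ≤ n) (f : EuclideanSpace ℝ (Fin n) → ℝ)
    (hf_cont : ContinuousOn f (sphere (0 : EuclideanSpace ℝ (Fin n)) 1))
    (hf_pos : ∀ v ∈ sphere (0 : EuclideanSpace ℝ (Fin n)) 1, 0 < f v) :
    {z : EuclideanSpace ℝ (Fin n) |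
        ∀ y ∈ {y : EuclideanSpace ℝ (Fin n) |
          ∀ v ∈ sphere (0 : EuclideanSpace ℝ (Fin n)) 1, ⟪y, v⟫_ℝ ≤ f v}, ⟪z, y⟫_ℝ ≤ 1}
      = convexHull ℝ
          ((fun v => (f v)⁻¹ • v) '' sphere (0 : EuclideanSpace ℝ (Fin n)) 1) := by
  set S : Set (EuclideanSpace ℝ (Fin n)) := sphere (0 : EuclideanSpace ℝ (Fin n)) 1 with hS
  set A : Set (EuclideanSpace ℝ (Fin n)) := (fun v => (f v)⁻¹ • v) '' S with hA
  -- the sphere is nonempty and symmetric; 0 lies in the convex hull of A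
  have hzero : (0 : EuclideanSpace ℝ (Fin n)) ∈ convexHull ℝ A := by
    set v₀ : EuclideanSpace ℝ (Fin n) :=
      EuclideanSpace.single (⟨0, by omega⟩ : Fin n) (1 : ℝ) with hv₀
    have hv₀S : v₀ ∈ S := by
      simp [hS, mem_sphere_zero_iff_norm, hv₀, EuclideanSpace.norm_single]
    have hnegS : -v₀ ∈ S := by
      rw [hS, mem_sphere_zero_iff_norm, norm_neg]
      exact mem_sphere_zero_iff_norm.mp hv₀S
    set α := (f v₀)⁻¹ with hα
    set β := (f (-v₀))⁻¹ with hβ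
    have hαpos : 0 < α := inv_pos.mpr (hf_pos _ hv₀S)
    have hβpos : 0 < β := inv_pos.mpr (hf_pos _ hnegS)
    have ha : α • v₀ ∈ A := ⟨v₀, hv₀S, rfl⟩
    have hb : β • (-v₀) ∈ A := ⟨-v₀, hnegS, rfl⟩
    have hsum : 0 < α + β := by linarith
    set t := β / (α + β) with ht
    have ht0 : 0 ≤ t := div_nonneg hβpos.le hsum.le
    have ht1 : 0 ≤ 1 - t := by
      rw [sub_nonneg, ht]
      exact div_le_one_of_le₀ (by linarith) hsum.le
    have hmem := (convex_convexHull ℝ A) (subset_convexHull ℝ A ha)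
      (subset_convexHull ℝ A hb) ht0 ht1 (by ring)
    have heq : t • (α • v₀) + (1 - t) • (β • (-v₀)) = 0 := by
      rw [smul_smul, smul_neg, smul_neg, smul_smul, ← sub_eq_add_neg, ← sub_smul]
      have h0 : t * α - (1 - t) * β = 0 := by
        rw [ht]
        field_simp
        ring
      rw [h0, zero_smul]
    rwa [heq] at hmem
  apply Set.Subset.antisymm
  · intro z hz
    by_contra hzc
    have hScpt : IsCompact S := isCompact_sphere _ _
    have hgc : ContinuousOn (fun v => (f v)⁻¹ • v) S :=
      (hf_cont.inv₀ (fun v hv => (hf_pos v hv).ne')).smul continuousOn_id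
    have hAcpt : IsCompact A := hScpt.image_of_continuousOn hgc
    have hAne : A.Nonempty := ⟨_, Set.mem_image_of_mem _ (by
      simp [hS, mem_sphere_zero_iff_norm, EuclideanSpace.norm_single]
      : EuclideanSpace.single (⟨0, by omega⟩ : Fin n) (1:ℝ) ∈ S)⟩
    have hconv : Convex ℝ (convexHull ℝ A) := convex_convexHull ℝ A
    have hclosed : IsClosed (convexHull ℝ A) :=
      (isCompact_convexHull_aux hAcpt hAne).isClosed
    obtain ⟨g, u, hg1, hg2⟩ := geometric_hahn_banach_closed_point hconv hclosed hzc
    set w : EuclideanSpace ℝ (Fin n) :=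
      (InnerProductSpace.toDual ℝ (EuclideanSpace ℝ (Fin n))).symm g with hw
    have hgw : ∀ x : EuclideanSpace ℝ (Fin n), g x = ⟪w, x⟫_ℝ := fun x =>
      (InnerProductSpace.toDual_symm_apply).symm
    have hupos : 0 < u := by
      have := hg1 0 hzero
      simpa using this
    have hyK : ∀ v ∈ S, ⟪u⁻¹ • w, v⟫_ℝ ≤ f v := by
      intro v hv
      have hgv : g ((f v)⁻¹ • v) < u := hg1 _ (subset_convexHull ℝ A ⟨v, hv, rfl⟩)
      rw [hgw, real_inner_smul_right] at hgv
      have hfv := hf_pos v hv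
      rw [real_inner_smul_left]
      rw [inv_mul_lt_iff₀ hfv, mul_comm] at hgv
      rw [inv_mul_le_iff₀ hupos]
      nlinarith
    have hle := hz (u⁻¹ • w) hyK
    rw [real_inner_smul_right, inv_mul_le_iff₀ hupos, mul_one] at hle
    have hlt : u < ⟪z, w⟫_ℝ := by
      rw [real_inner_comm, ← hgw]
      exact hg2
    linarith
  · apply convexHull_min
    · rintro _ ⟨v, hv, rfl⟩ y hy
      have h1 := hy v hv
      have hfv := hf_pos v hv
      show ⟪(f v)⁻¹ • v, y⟫_ℝ ≤ 1
      rw [real_inner_smul_left, real_inner_comm, inv_mul_le_iff₀ hfv, mul_one]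
      exact h1
    · intro z1 hz1 z2 hz2 a b ha hb hab y hy
      have h1 := hz1 y hy
      have h2 := hz2 y hy
      show ⟪a • z1 + b • z2, y⟫_ℝ ≤ 1
      calc ⟪a • z1 + b • z2, y⟫_ℝ = a * ⟪z1, y⟫_ℝ + b * ⟪z2, y⟫_ℝ := by
            rw [inner_add_left, real_inner_smul_left, real_inner_smul_left]
          _ ≤ a * 1 + b * 1 := by
            apply add_le_add
            · exact mul_le_mul_of_nonneg_left h1 ha
            · exact mul_le_mul_of_nonneg_left h2 hb
          _ = 1 := by linarith
end

section
/- Let n ≥ 2, let Θ ⊆ S^{n-1} be a closed set not contained in any closed hemisphere, let ρ₀ : Θ → (0,∞) and g : Θ → ℝ be continuous, let δ > 0, and for s ∈ (-δ,δ) let ρ_s : Θ → (0,∞) be continuous with log ρ_s(v) = log ρ₀(v) + s g(v) + o(s,v), where o(s,·)/s → 0 uniformly on Θ as s → 0. Write ⟨ρ_s⟩ = conv{ρ_s(v) v : v ∈ Θ}. Let p ∈ ℝ and let v ∈ S^{n-1} be such that there exists a unique ξ ∈ S^{n-1} with ρ_{⟨ρ₀⟩}(ξ)⟨ξ,v⟩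 = h_{⟨ρ₀⟩}(v). Then ξ ∈ Θ and lim_{s→0} (h_{⟨ρ_s⟩}(v)^{-p} − h_{⟨ρ₀⟩}(v)^{-p})/s = −p · h_{⟨ρ₀⟩}(v)^{-p} · g(ξ). -/
open MeasureTheory Metric Filter
open scoped InnerProductSpace ENNReal Topology

lemma bddAbove_inner_image {n : ℕ} {A : Set (EuclideanSpace ℝ (Fin n))}
    (hA : Bornology.IsBounded A) (x : EuclideanSpace ℝ (Fin n)) :
    BddAbove ((fun y => ⟪x, y⟫_ℝ) '' A) := by
  obtain ⟨R, hR⟩ := hA.exists_norm_le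
  refine ⟨‖x‖ * |R|, ?_⟩
  rintro _ ⟨y, hy, rfl⟩
  calc ⟪x, y⟫_ℝ ≤ ‖x‖ * ‖y‖ := real_inner_le_norm x y
    _ ≤ ‖x‖ * |R| := by
        have := hR y hy
        nlinarith [norm_nonneg x, norm_nonneg y, le_abs_self R]

lemma suppFn_convexHull {n : ℕ} {A : Set (EuclideanSpace ℝ (Fin n))}
    (hA : Bornology.IsBounded A) (hne : A.Nonempty) (x : EuclideanSpace ℝ (Fin n)) :
    suppFn (convexHull ℝ A) x = suppFn A x := by
  unfold suppFn
  apply le_antisymm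
  · apply csSup_le ((hne.mono (subset_convexHull ℝ A)).image _)
    rintro _ ⟨z, hz, rfl⟩
    have hconv : convexHull ℝ A ⊆ {y | ⟪x, y⟫_ℝ ≤ sSup ((fun y => ⟪x, y⟫_ℝ) '' A)} :=
      convexHull_min (fun a ha => le_csSup (bddAbove_inner_image hA x) ⟨a, ha, rfl⟩)
        (convex_halfSpace_le ⟨fun a b => inner_add_right x a b,
          fun c a => real_inner_smul_right x a c⟩ _)
    exact hconv hz
  · exact csSup_le_csSup
      (bddAbove_inner_image ((isBounded_convexHull (s := A)).mpr hA) x)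
      (hne.image _) (Set.image_mono (subset_convexHull ℝ A))

/-- The auxiliary function `(e^u - 1)/u`, extended by `1` at `u = 0`. -/
noncomputable def expRatio (u : ℝ) : ℝ := if u = 0 then 1 else (Real.exp u - 1) / u

lemma expRatio_tendsto : Filter.Tendsto expRatio (nhds 0) (nhds 1) := by
  rw [← nhdsNE_sup_pure (0 : ℝ)]
  refine Filter.Tendsto.sup ?_ ?_
  · have h1 : Filter.Tendsto (slope Real.exp 0) (𝓝[≠] (0:ℝ)) (𝓝 1) := by
      have := (hasDerivAt_iff_tendsto_slope).mp (Real.hasDerivAt_exp 0)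
      simpa [Real.exp_zero] using this
    refine h1.congr' ?_
    filter_upwards [self_mem_nhdsWithin] with u hu
    have hu' : u ≠ 0 := hu
    simp [slope_def_field, expRatio, hu', Real.exp_zero]
  · have : expRatio 0 = 1 := by simp [expRatio]
    simpa [this] using tendsto_pure_nhds expRatio (0 : ℝ)

lemma rpow_diff_eq {x y : ℝ} (s p : ℝ) (hx : 0 < x) (hy : 0 < y) (hs : s ≠ 0) :
    (y ^ (-p) - x ^ (-p)) / s
      = x ^ (-p) * ((-p * ((Real.log y - Real.log x) / s)) *
          expRatio (s * (-p * ((Real.log y - Real.log x) / s)))) := by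
  have hu : s * (-p * ((Real.log y - Real.log x) / s)) = -p * (Real.log y - Real.log x) := by
    field_simp
  set u := -p * (Real.log y - Real.log x) with hudef
  have hyx : y ^ (-p) = x ^ (-p) * Real.exp u := by
    rw [Real.rpow_def_of_pos hy, Real.rpow_def_of_pos hx, ← Real.exp_add]
    congr 1
    rw [hudef]; ring
  have hps : -p * ((Real.log y - Real.log x) / s) = u / s := by
    rw [hudef]; field_simp
  rw [hu, hyx, hps]
  rcases eq_or_ne u 0 with h | h
  · simp [h, expRatio]
  · rw [expRatio, if_neg h]
    field_simp

/-- Differentiability of `h^{-p}` of a logarithmic family of convex hulls at a point `v` of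
the sphere admitting a unique radial Gauss image point `ξ`: one has `ξ ∈ Θ` and
`lim_{s→0} (h_{⟨ρ_s⟩}(v)^{-p} − h_{⟨ρ₀⟩}(v)^{-p})/s = −p h_{⟨ρ₀⟩}(v)^{-p} g(ξ)`. -/
theorem stmt13 (n : ℕ) (hn : 2 ≤ n)
    (Θ : Set (EuclideanSpace ℝ (Fin n))) (hΘ_closed : IsClosed Θ)
    (hΘ_sub : Θ ⊆ sphere (0 : EuclideanSpace ℝ (Fin n)) 1)
    (hΘ_hemi : ∀ u ∈ sphere (0 : EuclideanSpace ℝ (Fin n)) 1, ∃ w ∈ Θ, ⟪w, u⟫_ℝ < 0)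
    (g : EuclideanSpace ℝ (Fin n) → ℝ) (hg : ContinuousOn g Θ)
    (δ : ℝ) (hδ : 0 < δ)
    (ρ : ℝ → EuclideanSpace ℝ (Fin n) → ℝ)
    (hρ_cont : ∀ s ∈ Set.Ioo (-δ) δ, ContinuousOn (ρ s) Θ)
    (hρ_pos : ∀ s ∈ Set.Ioo (-δ) δ, ∀ v ∈ Θ, 0 < ρ s v)
    (hlog : ∀ ε > (0 : ℝ), ∃ δ' > (0 : ℝ), ∀ s : ℝ, |s| < δ' → s ≠ 0 → ∀ v ∈ Θ,
      |Real.log (ρ s v) - Real.log (ρ 0 v) - s * g v| ≤ ε * |s|)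
    (p : ℝ) (v : EuclideanSpace ℝ (Fin n)) (hv : v ∈ sphere (0 : EuclideanSpace ℝ (Fin n)) 1)
    (ξ : EuclideanSpace ℝ (Fin n)) (hξ : ξ ∈ sphere (0 : EuclideanSpace ℝ (Fin n)) 1)
    (hξ_eq : radFn (convexHull ℝ ((fun w => ρ 0 w • w) '' Θ)) ξ * ⟪ξ, v⟫_ℝ
      = suppFn (convexHull ℝ ((fun w => ρ 0 w • w) '' Θ)) v)
    (hξ_uniq : ∀ ξ' ∈ sphere (0 : EuclideanSpace ℝ (Fin n)) 1,
      radFn (convexHull ℝ ((fun w => ρ 0 w • w) '' Θ)) ξ' * ⟪ξ', v⟫_ℝ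
        = suppFn (convexHull ℝ ((fun w => ρ 0 w • w) '' Θ)) v → ξ' = ξ) :
    ξ ∈ Θ ∧
    Filter.Tendsto (fun s : ℝ =>
        ((suppFn (convexHull ℝ ((fun w => ρ s w • w) '' Θ)) v) ^ (-p)
          - (suppFn (convexHull ℝ ((fun w => ρ 0 w • w) '' Θ)) v) ^ (-p)) / s)
      (nhdsWithin (0 : ℝ) {(0 : ℝ)}ᶜ)
      (nhds (-p * (suppFn (convexHull ℝ ((fun w => ρ 0 w • w) '' Θ)) v) ^ (-p) * g ξ)) := by
  classical
  set φ : ℝ → EuclideanSpace ℝ (Fin n) → ℝ := fun s w => ρ s w * ⟪v, w⟫_ℝ with hφdef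
  set Hs : ℝ → ℝ := fun s => suppFn (convexHull ℝ ((fun w => ρ s w • w) '' Θ)) v with hHsdef
  have hΘcomp : IsCompact Θ :=
    (isCompact_sphere (0 : EuclideanSpace ℝ (Fin n)) 1).of_isClosed_subset hΘ_closed hΘ_sub
  have hΘne : Θ.Nonempty := by
    obtain ⟨w, hw, -⟩ := hΘ_hemi v hv
    exact ⟨w, hw⟩
  have h0mem : (0 : ℝ) ∈ Set.Ioo (-δ) δ := ⟨by linarith, hδ⟩
  have hnorm1 : ∀ w ∈ Θ, ‖w‖ = 1 := by
    intro w hw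
    simpa using hΘ_sub hw
  have hφcont : ∀ s ∈ Set.Ioo (-δ) δ, ContinuousOn (φ s) Θ := by
    intro s hs
    exact (hρ_cont s hs).mul ((continuous_const.inner continuous_id).continuousOn)
  -- the support function equals the sup of φ s over Θ
  have hH : ∀ s ∈ Set.Ioo (-δ) δ, Hs s = sSup (φ s '' Θ) := by
    intro s hs
    have hcomp : IsCompact ((fun w => ρ s w • w) '' Θ) :=
      hΘcomp.image_of_continuousOn ((hρ_cont s hs).smul continuousOn_id)
    have himg : (fun y => ⟪v, y⟫_ℝ) '' ((fun w => ρ s w • w) '' Θ) = φ s '' Θ := by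
      rw [Set.image_image]
      refine Set.image_congr fun w _ => ?_
      exact real_inner_smul_right v w (ρ s w)
    simp only [hHsdef]
    rw [suppFn_convexHull hcomp.isBounded (hΘne.image _) v]
    unfold suppFn
    rw [himg]
  -- maximizers exist
  have hmax : ∀ s ∈ Set.Ioo (-δ) δ, ∃ w ∈ Θ, IsMaxOn (φ s) Θ w ∧ Hs s = φ s w := by
    intro s hs
    obtain ⟨w, hw, hmax⟩ := hΘcomp.exists_isMaxOn hΘne (hφcont s hs)
    refine ⟨w, hw, hmax, ?_⟩
    rw [hH s hs]
    exact IsGreatest.csSup_eq ⟨⟨w, hw, rfl⟩, by rintro _ ⟨u, hu, rfl⟩; exact hmax hu⟩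
  -- positivity of h0
  have hinner_ex : ∃ w ∈ Θ, 0 < ⟪v, w⟫_ℝ := by
    have hneg : -v ∈ sphere (0 : EuclideanSpace ℝ (Fin n)) 1 := by
      simpa using hv
    obtain ⟨w, hw, hwv⟩ := hΘ_hemi (-v) hneg
    refine ⟨w, hw, ?_⟩
    have : ⟪w, -v⟫_ℝ = -⟪w, v⟫_ℝ := inner_neg_right w v
    rw [real_inner_comm]
    linarith [hwv, this.symm ▸ hwv]
  obtain ⟨w₀, hw₀Θ, hmax₀, hH₀⟩ := hmax 0 h0mem
  have hH0pos : 0 < Hs 0 := by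
    obtain ⟨w, hw, hwpos⟩ := hinner_ex
    have h1 : φ 0 w ≤ φ 0 w₀ := hmax₀ hw
    have h2 : 0 < φ 0 w := mul_pos (hρ_pos 0 h0mem w hw) hwpos
    rw [hH₀]; linarith
  -- any maximizer of φ 0 equals ξ
  have huniq : ∀ w ∈ Θ, φ 0 w = Hs 0 → w = ξ := by
    intro w hw hweq
    have hρw : 0 < ρ 0 w := hρ_pos 0 h0mem w hw
    have hwv : 0 < ⟪v, w⟫_ℝ := by
      have hpos : 0 < φ 0 w := hweq ▸ hH0pos
      by_contra h
      push_neg at h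
      have : φ 0 w ≤ 0 := mul_nonpos_of_nonneg_of_nonpos hρw.le h
      linarith
    have hKb : Bornology.IsBounded (convexHull ℝ ((fun w => ρ 0 w • w) '' Θ)) :=
      (isBounded_convexHull).mpr
        (hΘcomp.image_of_continuousOn ((hρ_cont 0 h0mem).smul continuousOn_id)).isBounded
    obtain ⟨R, hR⟩ := hKb.exists_norm_le
    have hmemK : ρ 0 w • w ∈ convexHull ℝ ((fun w => ρ 0 w • w) '' Θ) :=
      subset_convexHull ℝ _ ⟨w, hw, rfl⟩
    have hSne : ρ 0 w ∈ {c : ℝ | 0 < c ∧ c • w ∈ convexHull ℝ ((fun w => ρ 0 w • w) '' Θ)} :=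
      ⟨hρw, hmemK⟩
    have hSbdd : BddAbove {c : ℝ | 0 < c ∧ c • w ∈ convexHull ℝ ((fun w => ρ 0 w • w) '' Θ)} := by
      refine ⟨R, fun c hc => ?_⟩
      obtain ⟨hcpos, hcK⟩ := hc
      have hn := hR _ hcK
      rw [norm_smul, hnorm1 w hw, mul_one, Real.norm_eq_abs] at hn
      calc c ≤ |c| := le_abs_self c
        _ ≤ R := hn
    have hub : ∀ c ∈ {c : ℝ | 0 < c ∧ c • w ∈ convexHull ℝ ((fun w => ρ 0 w • w) '' Θ)},
        c * ⟪v, w⟫_ℝ ≤ Hs 0 := by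
      rintro c ⟨hcpos, hcK⟩
      have : ⟪v, c • w⟫_ℝ ≤ Hs 0 :=
        le_csSup (bddAbove_inner_image hKb v) ⟨_, hcK, rfl⟩
      rwa [real_inner_smul_right] at this
    have h1 : ρ 0 w ≤ radFn (convexHull ℝ ((fun w => ρ 0 w • w) '' Θ)) w :=
      le_csSup hSbdd hSne
    have h2 : radFn (convexHull ℝ ((fun w => ρ 0 w • w) '' Θ)) w * ⟪v, w⟫_ℝ ≤ Hs 0 := by
      have hle : radFn (convexHull ℝ ((fun w => ρ 0 w • w) '' Θ)) w ≤ Hs 0 / ⟪v, w⟫_ℝ := by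
        refine csSup_le ⟨_, hSne⟩ fun c hc => ?_
        exact (le_div_iff₀ hwv).mpr (hub c hc)
      calc radFn (convexHull ℝ ((fun w => ρ 0 w • w) '' Θ)) w * ⟪v, w⟫_ℝ
          ≤ (Hs 0 / ⟪v, w⟫_ℝ) * ⟪v, w⟫_ℝ := mul_le_mul_of_nonneg_right hle hwv.le
        _ = Hs 0 := div_mul_cancel₀ _ hwv.ne'
    have h3 : Hs 0 ≤ radFn (convexHull ℝ ((fun w => ρ 0 w • w) '' Θ)) w * ⟪v, w⟫_ℝ := by
      calc Hs 0 = ρ 0 w * ⟪v, w⟫_ℝ := hweq.symm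
        _ ≤ radFn (convexHull ℝ ((fun w => ρ 0 w • w) '' Θ)) w * ⟪v, w⟫_ℝ :=
          mul_le_mul_of_nonneg_right h1 hwv.le
    refine hξ_uniq w (hΘ_sub hw) ?_
    rw [real_inner_comm v w]
    exact le_antisymm h2 h3
  have hξΘ : ξ ∈ Θ := by
    have := huniq w₀ hw₀Θ hH₀.symm
    rw [← this]; exact hw₀Θ
  have hφξ : φ 0 ξ = Hs 0 := by
    have := huniq w₀ hw₀Θ hH₀.symm
    rw [← this]; exact hH₀.symm
  have hξv : 0 < ⟪v, ξ⟫_ℝ := by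
    have hρξ : 0 < ρ 0 ξ := hρ_pos 0 h0mem ξ hξΘ
    by_contra h
    push_neg at h
    have : φ 0 ξ ≤ 0 := mul_nonpos_of_nonneg_of_nonpos hρξ.le h
    linarith [hH0pos, hφξ ▸ this]
  -- key logarithmic estimate
  -- two-sided exponential bounds on ρ from the logarithmic hypothesis
  have hexp_bound : ∀ (ε' δ' : ℝ), (∀ s : ℝ, |s| < δ' → s ≠ 0 → ∀ w ∈ Θ,
      |Real.log (ρ s w) - Real.log (ρ 0 w) - s * g w| ≤ ε' * |s|) →
      ∀ s : ℝ, s ≠ 0 → |s| < δ' → |s| < δ → ∀ w ∈ Θ,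
      ρ s w ≤ ρ 0 w * Real.exp (s * g w + ε' * |s|) ∧
      ρ 0 w * Real.exp (s * g w - ε' * |s|) ≤ ρ s w := by
    intro ε' δ' hl s hsne hs1 hsδ w hw
    have hsIoo : s ∈ Set.Ioo (-δ) δ := by
      obtain ⟨ha, hb⟩ := abs_lt.mp hsδ
      exact ⟨ha, hb⟩
    have hρs : 0 < ρ s w := hρ_pos s hsIoo w hw
    have hρ0 : 0 < ρ 0 w := hρ_pos 0 h0mem w hw
    have hd := hl s hs1 hsne w hw
    obtain ⟨hd1, hd2⟩ := abs_le.mp hd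
    constructor
    · calc ρ s w = Real.exp (Real.log (ρ s w)) := (Real.exp_log hρs).symm
        _ ≤ Real.exp (Real.log (ρ 0 w) + (s * g w + ε' * |s|)) :=
          Real.exp_le_exp.mpr (by linarith)
        _ = ρ 0 w * Real.exp (s * g w + ε' * |s|) := by
          rw [Real.exp_add, Real.exp_log hρ0]
    · calc ρ 0 w * Real.exp (s * g w - ε' * |s|)
          = Real.exp (Real.log (ρ 0 w) + (s * g w - ε' * |s|)) := by
            rw [Real.exp_add, Real.exp_log hρ0]
        _ ≤ Real.exp (Real.log (ρ s w)) := Real.exp_le_exp.mpr (by linarith)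
        _ = ρ s w := Real.exp_log hρs
  -- bound on g over Θ
  have hgbound : ∃ G : ℝ, 0 ≤ G ∧ ∀ w ∈ Θ, |g w| ≤ G := by
    obtain ⟨C, hC⟩ := hΘcomp.exists_bound_of_continuousOn hg
    refine ⟨max C 0, le_max_right _ _, fun w hw => ?_⟩
    exact le_trans (by simpa [Real.norm_eq_abs] using hC w hw) (le_max_left _ _)
  obtain ⟨G, hG0, hG⟩ := hgbound
  set G' : ℝ := G + 1 with hG'def
  have hG'pos : 0 < G' := by simp only [hG'def]; linarith
  obtain ⟨δ₁, hδ₁, hlog1⟩ := hlog 1 one_pos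
  have hratio := hexp_bound 1 δ₁ hlog1
  -- coarse two-sided bound with constant G'
  have hcoarse : ∀ s : ℝ, s ≠ 0 → |s| < δ₁ → |s| < δ → ∀ w ∈ Θ,
      ρ s w ≤ ρ 0 w * Real.exp (G' * |s|) ∧ ρ 0 w * Real.exp (-(G' * |s|)) ≤ ρ s w := by
    intro s hsne hs1 hsδ w hw
    obtain ⟨h1, h2⟩ := hratio s hsne hs1 hsδ w hw
    have hρ0 : 0 < ρ 0 w := hρ_pos 0 h0mem w hw
    have hsg : |s * g w| ≤ G * |s| := by
      rw [abs_mul, mul_comm]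
      exact mul_le_mul_of_nonneg_right (hG w hw) (abs_nonneg s)
    obtain ⟨hsg1, hsg2⟩ := abs_le.mp hsg
    constructor
    · refine le_trans h1 (mul_le_mul_of_nonneg_left (Real.exp_le_exp.mpr ?_) hρ0.le)
      simp only [hG'def]; nlinarith [abs_nonneg s]
    · refine le_trans (mul_le_mul_of_nonneg_left (Real.exp_le_exp.mpr ?_) hρ0.le) h2
      simp only [hG'def]; nlinarith [abs_nonneg s]
  -- the key logarithmic estimate
  have hkey : ∀ ε > (0:ℝ), ∃ s₀ > (0:ℝ), ∀ s : ℝ, s ≠ 0 → |s| < s₀ →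
      0 < Hs s ∧ |Real.log (Hs s) - Real.log (Hs 0) - s * g ξ| ≤ 2 * ε * |s| := by
    intro ε hε
    -- radius of continuity of g at ξ
    have hgc := hg ξ hξΘ
    rw [Metric.continuousWithinAt_iff] at hgc
    obtain ⟨r, hr, hrg⟩ := hgc ε hε
    obtain ⟨δ₂, hδ₂, hlog2⟩ := hlog ε hε
    have hfine := hexp_bound ε δ₂ hlog2
    -- concentration of maximizers near ξ
    have hCcomp : IsCompact (Θ \ ball ξ r) := hΘcomp.diff isOpen_ball
    have hconc : ∃ s₁ > (0:ℝ), s₁ ≤ δ₁ ∧ s₁ ≤ δ ∧ ∀ s : ℝ, s ≠ 0 → |s| < s₁ →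
        ∀ w ∈ Θ, IsMaxOn (φ s) Θ w → w ∈ ball ξ r := by
      rcases (Θ \ ball ξ r).eq_empty_or_nonempty with hCe | hCne
      · refine ⟨min δ₁ δ, lt_min hδ₁ hδ, min_le_left _ _, min_le_right _ _, ?_⟩
        intro s _ _ w hw _
        by_contra hb
        exact (Set.eq_empty_iff_forall_notMem.mp hCe w) ⟨hw, hb⟩
      · obtain ⟨w₁, hw₁C, hmax₁⟩ :=
          hCcomp.exists_isMaxOn hCne ((hφcont 0 h0mem).mono Set.diff_subset)
        have hm_lt : φ 0 w₁ < Hs 0 := by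
          have hle : φ 0 w₁ ≤ Hs 0 := by
            rw [hH₀]; exact hmax₀ hw₁C.1
          rcases lt_or_eq_of_le hle with h | h
          · exact h
          · exfalso
            have : w₁ = ξ := huniq w₁ hw₁C.1 h
            exact hw₁C.2 (this ▸ mem_ball_self hr)
        set m : ℝ := φ 0 w₁ with hmdef
        have hcont : Continuous (fun s : ℝ =>
            Hs 0 * Real.exp (-(G' * |s|)) - m * Real.exp (G' * |s|)) :=
          (continuous_const.mul
            (Real.continuous_exp.comp (continuous_const.mul continuous_abs).neg)).sub
          (continuous_const.mul
            (Real.continuous_exp.comp (continuous_const.mul continuous_abs)))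
        have hf0 : Hs 0 * Real.exp (-(G' * |(0:ℝ)|)) - m * Real.exp (G' * |(0:ℝ)|)
            = Hs 0 - m := by simp
        obtain ⟨s₁', hs₁', hball⟩ := Metric.continuousAt_iff.mp hcont.continuousAt
          (Hs 0 - m) (by linarith)
        refine ⟨min s₁' (min δ₁ δ), lt_min hs₁' (lt_min hδ₁ hδ),
          le_trans (min_le_right _ _) (min_le_left _ _),
          le_trans (min_le_right _ _) (min_le_right _ _), ?_⟩
        intro s hsne hslt w hw hmaxw
        by_contra hb
        have hwC : w ∈ Θ \ ball ξ r := ⟨hw, hb⟩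
        have hslt1 : |s| < δ₁ := lt_of_lt_of_le hslt
          (le_trans (min_le_right _ _) (min_le_left _ _))
        have hsltδ : |s| < δ := lt_of_lt_of_le hslt
          (le_trans (min_le_right _ _) (min_le_right _ _))
        have hslts' : |s| < s₁' := lt_of_lt_of_le hslt (min_le_left _ _)
        -- the continuous function is positive at s
        have hfs_pos : 0 < Hs 0 * Real.exp (-(G' * |s|)) - m * Real.exp (G' * |s|) := by
          have := hball (show dist s 0 < s₁' by simpa [Real.dist_eq] using hslts')
          rw [Real.dist_eq, hf0] at this
          have := abs_lt.mp this
          linarith [this.1]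
        -- lower bound on φ s ξ
        have hρξb := (hcoarse s hsne hslt1 hsltδ ξ hξΘ).2
        have hφsξ : Hs 0 * Real.exp (-(G' * |s|)) ≤ φ s ξ := by
          have : (ρ 0 ξ * Real.exp (-(G' * |s|))) * ⟪v, ξ⟫_ℝ ≤ ρ s ξ * ⟪v, ξ⟫_ℝ :=
            mul_le_mul_of_nonneg_right hρξb hξv.le
          calc Hs 0 * Real.exp (-(G' * |s|))
              = (ρ 0 ξ * ⟪v, ξ⟫_ℝ) * Real.exp (-(G' * |s|)) := by rw [← hφξ]
            _ = (ρ 0 ξ * Real.exp (-(G' * |s|))) * ⟪v, ξ⟫_ℝ := by ring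
            _ ≤ ρ s ξ * ⟪v, ξ⟫_ℝ := this
        have hφξw : φ s ξ ≤ φ s w := hmaxw hξΘ
        -- upper bound on φ s w
        rcases le_or_gt ⟪v, w⟫_ℝ 0 with hvw | hvw
        · have h1 : φ s w ≤ 0 := by
            have hsIoo : s ∈ Set.Ioo (-δ) δ := by
              obtain ⟨ha, hb'⟩ := abs_lt.mp hsltδ
              exact ⟨ha, hb'⟩
            exact mul_nonpos_of_nonneg_of_nonpos (hρ_pos s hsIoo w hw).le hvw
          have h2 : 0 < φ s ξ := lt_of_lt_of_le
            (mul_pos hH0pos (Real.exp_pos _)) hφsξ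
          linarith
        · have hρwb := (hcoarse s hsne hslt1 hsltδ w hw).1
          have h1 : φ s w ≤ m * Real.exp (G' * |s|) := by
            calc φ s w = ρ s w * ⟪v, w⟫_ℝ := rfl
              _ ≤ (ρ 0 w * Real.exp (G' * |s|)) * ⟪v, w⟫_ℝ :=
                mul_le_mul_of_nonneg_right hρwb hvw.le
              _ = (ρ 0 w * ⟪v, w⟫_ℝ) * Real.exp (G' * |s|) := by ring
              _ ≤ m * Real.exp (G' * |s|) :=
                mul_le_mul_of_nonneg_right (hmax₁ hwC) (Real.exp_pos _).le
          linarith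
    obtain ⟨s₁, hs₁pos, hs₁δ₁, hs₁δ, hconc'⟩ := hconc
    refine ⟨min s₁ δ₂, lt_min hs₁pos hδ₂, fun s hsne hslt => ?_⟩
    have hslt₁ : |s| < s₁ := lt_of_lt_of_le hslt (min_le_left _ _)
    have hslt₂ : |s| < δ₂ := lt_of_lt_of_le hslt (min_le_right _ _)
    have hsδ : |s| < δ := lt_of_lt_of_le hslt₁ hs₁δ
    have hsIoo : s ∈ Set.Ioo (-δ) δ := by
      obtain ⟨ha, hb⟩ := abs_lt.mp hsδ
      exact ⟨ha, hb⟩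
    obtain ⟨ws, hwsΘ, hmaxs, hHs_eq⟩ := hmax s hsIoo
    have hws_ball : ws ∈ ball ξ r := hconc' s hsne hslt₁ ws hwsΘ hmaxs
    have hgws : |g ws - g ξ| < ε := by
      have := hrg hwsΘ (mem_ball.mp hws_ball)
      rwa [Real.dist_eq] at this
    -- lower bound on Hs s
    obtain ⟨-, hlo⟩ := hfine s hsne hslt₂ hsδ ξ hξΘ
    have hlow : Hs 0 * Real.exp (s * g ξ - ε * |s|) ≤ Hs s := by
      have h1 : (ρ 0 ξ * Real.exp (s * g ξ - ε * |s|)) * ⟪v, ξ⟫_ℝ ≤ ρ s ξ * ⟪v, ξ⟫_ℝ :=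
        mul_le_mul_of_nonneg_right hlo hξv.le
      have h2 : φ s ξ ≤ φ s ws := hmaxs hξΘ
      calc Hs 0 * Real.exp (s * g ξ - ε * |s|)
          = (ρ 0 ξ * ⟪v, ξ⟫_ℝ) * Real.exp (s * g ξ - ε * |s|) := by rw [← hφξ]
        _ = (ρ 0 ξ * Real.exp (s * g ξ - ε * |s|)) * ⟪v, ξ⟫_ℝ := by ring
        _ ≤ ρ s ξ * ⟪v, ξ⟫_ℝ := h1
        _ ≤ φ s ws := h2
        _ = Hs s := hHs_eq.symm
    have hHspos : 0 < Hs s :=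
      lt_of_lt_of_le (mul_pos hH0pos (Real.exp_pos _)) hlow
    -- upper bound on Hs s
    have hwsv : 0 < ⟪v, ws⟫_ℝ := by
      have hρws : 0 < ρ s ws := hρ_pos s hsIoo ws hwsΘ
      by_contra h
      push_neg at h
      have : φ s ws ≤ 0 := mul_nonpos_of_nonneg_of_nonpos hρws.le h
      rw [← hHs_eq] at this
      linarith
    obtain ⟨hhi, -⟩ := hfine s hsne hslt₂ hsδ ws hwsΘ
    have hsgws : s * g ws ≤ s * g ξ + ε * |s| := by
      have h1 : s * (g ws - g ξ) ≤ |s * (g ws - g ξ)| := le_abs_self _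
      rw [abs_mul] at h1
      nlinarith [abs_nonneg s, mul_le_mul_of_nonneg_left hgws.le (abs_nonneg s)]
    have hup : Hs s ≤ Hs 0 * Real.exp (s * g ξ + 2 * ε * |s|) := by
      have hφ0ws : φ 0 ws ≤ Hs 0 := by rw [hH₀]; exact hmax₀ hwsΘ
      calc Hs s = ρ s ws * ⟪v, ws⟫_ℝ := hHs_eq
        _ ≤ (ρ 0 ws * Real.exp (s * g ws + ε * |s|)) * ⟪v, ws⟫_ℝ :=
          mul_le_mul_of_nonneg_right hhi hwsv.le
        _ = (ρ 0 ws * ⟪v, ws⟫_ℝ) * Real.exp (s * g ws + ε * |s|) := by ring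
        _ ≤ Hs 0 * Real.exp (s * g ws + ε * |s|) :=
          mul_le_mul_of_nonneg_right hφ0ws (Real.exp_pos _).le
        _ ≤ Hs 0 * Real.exp (s * g ξ + 2 * ε * |s|) := by
          refine mul_le_mul_of_nonneg_left (Real.exp_le_exp.mpr ?_) hH0pos.le
          linarith
    refine ⟨hHspos, ?_⟩
    have hl1 : Real.log (Hs 0) + (s * g ξ - ε * |s|) ≤ Real.log (Hs s) := by
      calc Real.log (Hs 0) + (s * g ξ - ε * |s|)
          = Real.log (Hs 0 * Real.exp (s * g ξ - ε * |s|)) := by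
            rw [Real.log_mul hH0pos.ne' (Real.exp_ne_zero _), Real.log_exp]
        _ ≤ Real.log (Hs s) :=
          Real.log_le_log (mul_pos hH0pos (Real.exp_pos _)) hlow
    have hl2 : Real.log (Hs s) ≤ Real.log (Hs 0) + (s * g ξ + 2 * ε * |s|) := by
      calc Real.log (Hs s)
          ≤ Real.log (Hs 0 * Real.exp (s * g ξ + 2 * ε * |s|)) :=
            Real.log_le_log hHspos hup
        _ = Real.log (Hs 0) + (s * g ξ + 2 * ε * |s|) := by
          rw [Real.log_mul hH0pos.ne' (Real.exp_ne_zero _), Real.log_exp]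
    have hεs : 0 ≤ ε * |s| := mul_nonneg hε.le (abs_nonneg s)
    rw [abs_le]
    constructor
    · linarith
    · linarith
  refine ⟨hξΘ, ?_⟩
  -- limit of the logarithmic difference quotient
  have hLtend : Filter.Tendsto (fun s => (Real.log (Hs s) - Real.log (Hs 0)) / s)
      (𝓝[≠] (0:ℝ)) (𝓝 (g ξ)) := by
    rw [Metric.tendsto_nhdsWithin_nhds]
    intro ε hε
    obtain ⟨s₀, hs₀, hs⟩ := hkey (ε / 3) (by linarith)
    refine ⟨s₀, hs₀, fun s hsne hsd => ?_⟩
    have hsne' : s ≠ 0 := hsne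
    have habs : |s| < s₀ := by simpa [Real.dist_eq] using hsd
    obtain ⟨-, hbound⟩ := hs s hsne' habs
    have heq : (Real.log (Hs s) - Real.log (Hs 0)) / s - g ξ
        = (Real.log (Hs s) - Real.log (Hs 0) - s * g ξ) / s := by
      field_simp
    rw [Real.dist_eq, heq, abs_div]
    have hspos : 0 < |s| := abs_pos.mpr hsne'
    rw [div_lt_iff₀ hspos]
    calc |Real.log (Hs s) - Real.log (Hs 0) - s * g ξ| ≤ 2 * (ε/3) * |s| := hbound
      _ < ε * |s| := by nlinarith
  -- assemble the final limit
  obtain ⟨s₀, hs₀pos, hs₀⟩ := hkey 1 one_pos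
  have hatend : Filter.Tendsto
      (fun s => -p * ((Real.log (Hs s) - Real.log (Hs 0)) / s))
      (𝓝[≠] (0:ℝ)) (𝓝 (-p * g ξ)) := hLtend.const_mul (-p)
  have hstend : Filter.Tendsto
      (fun s : ℝ => s * (-p * ((Real.log (Hs s) - Real.log (Hs 0)) / s)))
      (𝓝[≠] (0:ℝ)) (𝓝 0) := by
    have h1 : Filter.Tendsto (fun s : ℝ => s) (𝓝[≠] (0:ℝ)) (𝓝 0) :=
      tendsto_id.mono_left nhdsWithin_le_nhds
    have h2 := h1.mul hatend
    rw [zero_mul] at h2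
    exact h2
  have hEtend : Filter.Tendsto
      (fun s => expRatio (s * (-p * ((Real.log (Hs s) - Real.log (Hs 0)) / s))))
      (𝓝[≠] (0:ℝ)) (𝓝 1) := expRatio_tendsto.comp hstend
  have hmain : Filter.Tendsto (fun s => (Hs 0) ^ (-p) *
      ((-p * ((Real.log (Hs s) - Real.log (Hs 0)) / s)) *
        expRatio (s * (-p * ((Real.log (Hs s) - Real.log (Hs 0)) / s)))))
      (𝓝[≠] (0:ℝ)) (𝓝 (-p * (Hs 0) ^ (-p) * g ξ)) := by
    rw [show -p * (Hs 0) ^ (-p) * g ξ = (Hs 0) ^ (-p) * (-p * g ξ * 1) by ring]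
    exact (hatend.mul hEtend).const_mul _
  refine hmain.congr' ?_
  have hev : ∀ᶠ s in 𝓝[≠] (0:ℝ), s ≠ 0 ∧ |s| < s₀ := by
    have h1 : ∀ᶠ s : ℝ in 𝓝 0, |s| < s₀ := by
      filter_upwards [Metric.ball_mem_nhds (0:ℝ) hs₀pos] with x hx
      simpa [Real.dist_eq] using mem_ball.mp hx
    filter_upwards [self_mem_nhdsWithin, eventually_nhdsWithin_of_eventually_nhds h1]
      with s h1 h2
    exact ⟨h1, h2⟩
  filter_upwards [hev] with s hs
  obtain ⟨hsne, hslt⟩ := hs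
  obtain ⟨hHspos, -⟩ := hs₀ s hsne hslt
  exact (rpow_diff_eq s p hH0pos hHspos hsne).symm
end

section
/- Let n ≥ 2, let Θ ⊆ S^{n-1} be a closed set not contained in any closed hemisphere, let ρ₀ : Θ → (0,∞) and g : Θ → ℝ be continuous, let δ > 0, and for s ∈ (-δ,δ) let ρ_s : Θ → (0,∞) be continuous with log ρ_s(v) = log ρ₀(v) + s g(v) + o(s,v), where o(s,·)/s → 0 uniformly on Θ as s → 0. Write ⟨ρ_s⟩ = conv{ρ_s(v) v : v ∈ Θ}. Then for every p ∈ ℝ there exist δ₀ ∈ (0,δ) and M > 0 such that |h_{⟨ρ_s⟩}(v)^{-p} − h_{⟨ρ₀⟩}(v)^{-p}| ≤ M|s| for all v ∈ S^{n-1} and all s ∈ (−δ₀,δ₀). -/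
open MeasureTheory Metric Filter
open scoped InnerProductSpace ENNReal Topology

set_option maxHeartbeats 1000000

/-- Uniform Lipschitz-type estimate for `h^{-p}` along a logarithmic family of convex hulls:
there are `δ₀ ∈ (0,δ)` and `M > 0` with
`|h_{⟨ρ_s⟩}(v)^{-p} − h_{⟨ρ₀⟩}(v)^{-p}| ≤ M|s|` for all `v ∈ S^{n-1}` and `|s| < δ₀`. -/
theorem stmt14 (n : ℕ) (hn : 2 ≤ n)
    (Θ : Set (EuclideanSpace ℝ (Fin n))) (hΘ_closed : IsClosed Θ)
    (hΘ_sub : Θ ⊆ sphere (0 : EuclideanSpace ℝ (Fin n)) 1)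
    (hΘ_hemi : ∀ u ∈ sphere (0 : EuclideanSpace ℝ (Fin n)) 1, ∃ w ∈ Θ, ⟪w, u⟫_ℝ < 0)
    (g : EuclideanSpace ℝ (Fin n) → ℝ) (hg : ContinuousOn g Θ)
    (δ : ℝ) (hδ : 0 < δ)
    (ρ : ℝ → EuclideanSpace ℝ (Fin n) → ℝ)
    (hρ_cont : ∀ s ∈ Set.Ioo (-δ) δ, ContinuousOn (ρ s) Θ)
    (hρ_pos : ∀ s ∈ Set.Ioo (-δ) δ, ∀ v ∈ Θ, 0 < ρ s v)
    (hlog : ∀ ε > (0 : ℝ), ∃ δ' > (0 : ℝ), ∀ s : ℝ, |s| < δ' → s ≠ 0 → ∀ v ∈ Θ,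
      |Real.log (ρ s v) - Real.log (ρ 0 v) - s * g v| ≤ ε * |s|)
    (p : ℝ) :
    ∃ δ₀ ∈ Set.Ioo (0 : ℝ) δ, ∃ M : ℝ, 0 < M ∧
      ∀ v ∈ sphere (0 : EuclideanSpace ℝ (Fin n)) 1, ∀ s : ℝ, |s| < δ₀ →
        |(suppFn (convexHull ℝ ((fun w => ρ s w • w) '' Θ)) v) ^ (-p)
          - (suppFn (convexHull ℝ ((fun w => ρ 0 w • w) '' Θ)) v) ^ (-p)| ≤ M * |s| := by
  classical
  set q : ℝ := -p with hqdef
  have h0δ : (0:ℝ) ∈ Set.Ioo (-δ) δ := ⟨by linarith, hδ⟩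
  have hΘ_cpt : IsCompact Θ :=
    (isCompact_sphere (0 : EuclideanSpace ℝ (Fin n)) 1).of_isClosed_subset hΘ_closed hΘ_sub
  have hnt : Nontrivial (EuclideanSpace ℝ (Fin n)) := by
    refine ⟨EuclideanSpace.single ⟨0, by omega⟩ (1:ℝ), 0, ?_⟩
    intro h
    have h1 := congrArg norm h
    simp [EuclideanSpace.norm_single] at h1
  obtain ⟨u0, hu0⟩ : (sphere (0 : EuclideanSpace ℝ (Fin n)) 1).Nonempty :=
    NormedSpace.sphere_nonempty.mpr zero_le_one
  obtain ⟨w0, hw0, -⟩ := hΘ_hemi u0 hu0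
  have hΘ_ne : Θ.Nonempty := ⟨w0, hw0⟩
  have hnorm : ∀ w ∈ Θ, ‖w‖ = 1 := fun w hw => by
    simpa [mem_sphere_zero_iff_norm] using hΘ_sub hw
  have hemi' : ∀ v ∈ sphere (0 : EuclideanSpace ℝ (Fin n)) 1, ∃ w ∈ Θ, 0 < ⟪v, w⟫_ℝ := by
    intro v hv
    have hv' : -v ∈ sphere (0 : EuclideanSpace ℝ (Fin n)) 1 := by
      simp only [mem_sphere_zero_iff_norm] at hv ⊢
      simpa using hv
    obtain ⟨w, hw, hlt⟩ := hΘ_hemi (-v) hv'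
    refine ⟨w, hw, ?_⟩
    rw [real_inner_comm]
    have h2 : ⟪w, -v⟫_ℝ = -⟪w, v⟫_ℝ := inner_neg_right w v
    linarith [h2 ▸ hlt]
  set F : ℝ → EuclideanSpace ℝ (Fin n) → ℝ :=
    fun s v => sSup ((fun w => ρ s w * ⟪v, w⟫_ℝ) '' Θ) with hF
  have hFdef : ∀ s v, F s v = sSup ((fun w => ρ s w * ⟪v, w⟫_ℝ) '' Θ) := fun s v => rfl
  have hcont_aux : ∀ s ∈ Set.Ioo (-δ) δ, ∀ v : EuclideanSpace ℝ (Fin n),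
      ContinuousOn (fun w => ρ s w * ⟪v, w⟫_ℝ) Θ := by
    intro s hs v
    exact (hρ_cont s hs).mul ((continuous_const.inner continuous_id).continuousOn)
  have hbdd : ∀ s ∈ Set.Ioo (-δ) δ, ∀ v : EuclideanSpace ℝ (Fin n),
      BddAbove ((fun w => ρ s w * ⟪v, w⟫_ℝ) '' Θ) := by
    intro s hs v
    exact (hΘ_cpt.image_of_continuousOn (hcont_aux s hs v)).bddAbove
  have hle_F : ∀ s ∈ Set.Ioo (-δ) δ, ∀ v : EuclideanSpace ℝ (Fin n), ∀ w ∈ Θ,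
      ρ s w * ⟪v, w⟫_ℝ ≤ F s v := by
    intro s hs v w hw
    exact le_csSup (hbdd s hs v) (Set.mem_image_of_mem _ hw)
  have hFpos : ∀ s ∈ Set.Ioo (-δ) δ, ∀ v ∈ sphere (0 : EuclideanSpace ℝ (Fin n)) 1,
      0 < F s v := by
    intro s hs v hv
    obtain ⟨w, hw, hwv⟩ := hemi' v hv
    exact lt_of_lt_of_le (mul_pos (hρ_pos s hs w hw) hwv) (hle_F s hs v w hw)
  -- identification of the support function of the hull
  have hsupp : ∀ s ∈ Set.Ioo (-δ) δ, ∀ v : EuclideanSpace ℝ (Fin n),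
      suppFn (convexHull ℝ ((fun w => ρ s w • w) '' Θ)) v = F s v := by
    intro s hs v
    set A := (fun w => ρ s w • w) '' Θ with hA
    have himg : (fun y => ⟪v, y⟫_ℝ) '' A = (fun w => ρ s w * ⟪v, w⟫_ℝ) '' Θ := by
      rw [hA, Set.image_image]
      exact Set.image_congr fun w _ => real_inner_smul_right v w (ρ s w)
    have hAne : A.Nonempty := hΘ_ne.image _
    have hconv : ConvexOn ℝ Set.univ (fun y : EuclideanSpace ℝ (Fin n) => ⟪v, y⟫_ℝ) := by
      refine ⟨convex_univ, fun x _ y _ a b _ _ _ => le_of_eq ?_⟩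
      show ⟪v, a • x + b • y⟫_ℝ = a • ⟪v, x⟫_ℝ + b • ⟪v, y⟫_ℝ
      rw [inner_add_right, real_inner_smul_right, real_inner_smul_right, smul_eq_mul,
        smul_eq_mul]
    have hkey : ∀ x ∈ convexHull ℝ A, ⟪v, x⟫_ℝ ≤ F s v := by
      intro x hx
      obtain ⟨y, hy, hxy⟩ := hconv.exists_ge_of_mem_convexHull (Set.subset_univ A) hx
      refine hxy.trans ?_
      obtain ⟨w, hw, rfl⟩ := hy
      calc ⟪v, ρ s w • w⟫_ℝ = ρ s w * ⟪v, w⟫_ℝ := real_inner_smul_right v w (ρ s w)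
        _ ≤ F s v := hle_F s hs v w hw
    show sSup ((fun y => ⟪v, y⟫_ℝ) '' convexHull ℝ A) = F s v
    apply le_antisymm
    · apply csSup_le ((hAne.mono (subset_convexHull ℝ A)).image _)
      rintro t ⟨x, hx, rfl⟩
      exact hkey x hx
    · rw [hFdef, ← himg]
      apply csSup_le_csSup
      · refine ⟨F s v, ?_⟩
        rintro t ⟨x, hx, rfl⟩
        exact hkey x hx
      · exact hAne.image _
      · exact Set.image_mono (subset_convexHull ℝ A)
  -- upper bound R for ρ 0
  obtain ⟨R, hR⟩ := hΘ_cpt.exists_bound_of_continuousOn (hρ_cont 0 h0δ)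
  have hρ0_le : ∀ w ∈ Θ, ρ 0 w ≤ R := fun w hw =>
    le_trans (le_abs_self _) (by simpa [Real.norm_eq_abs] using hR w hw)
  have hRpos : 0 < R := lt_of_lt_of_le (hρ_pos 0 h0δ w0 hw0) (hρ0_le w0 hw0)
  have hF0_le : ∀ v ∈ sphere (0 : EuclideanSpace ℝ (Fin n)) 1, F 0 v ≤ R := by
    intro v hv
    apply csSup_le (hΘ_ne.image _)
    rintro t ⟨w, hw, rfl⟩
    have h1 : ⟪v, w⟫_ℝ ≤ 1 := by
      have h2 := real_inner_le_norm v w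
      rw [hnorm w hw, mem_sphere_zero_iff_norm.mp hv] at h2
      simpa using h2
    calc ρ 0 w * ⟪v, w⟫_ℝ ≤ ρ 0 w * 1 := mul_le_mul_of_nonneg_left h1 (hρ_pos 0 h0δ w hw).le
      _ = ρ 0 w := mul_one _
      _ ≤ R := hρ0_le w hw
  -- Lipschitz bound for F 0, continuity, minimum m on the sphere
  have hF0_lip : ∀ v v' : EuclideanSpace ℝ (Fin n), F 0 v ≤ F 0 v' + R * ‖v - v'‖ := by
    intro v v'
    apply csSup_le (hΘ_ne.image _)
    rintro t ⟨w, hw, rfl⟩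
    have hin : ⟪v - v', w⟫_ℝ ≤ ‖v - v'‖ := by
      have h2 := real_inner_le_norm (v - v') w
      rw [hnorm w hw, mul_one] at h2
      exact h2
    have h2 : ρ 0 w * ⟪v - v', w⟫_ℝ ≤ R * ‖v - v'‖ := by
      calc ρ 0 w * ⟪v - v', w⟫_ℝ ≤ ρ 0 w * ‖v - v'‖ :=
            mul_le_mul_of_nonneg_left hin (hρ_pos 0 h0δ w hw).le
        _ ≤ R * ‖v - v'‖ := mul_le_mul_of_nonneg_right (hρ0_le w hw) (norm_nonneg _)
    have h3 : ρ 0 w * ⟪v', w⟫_ℝ ≤ F 0 v' := hle_F 0 h0δ v' w hw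
    calc ρ 0 w * ⟪v, w⟫_ℝ = ρ 0 w * ⟪v', w⟫_ℝ + ρ 0 w * ⟪v - v', w⟫_ℝ := by
          rw [inner_sub_left]; ring
      _ ≤ F 0 v' + R * ‖v - v'‖ := add_le_add h3 h2
  have hF0_cont : Continuous (F 0) := by
    refine (LipschitzWith.of_dist_le_mul (K := Real.toNNReal R) ?_).continuous
    intro x y
    rw [Real.dist_eq, dist_eq_norm, Real.coe_toNNReal R hRpos.le, abs_sub_le_iff]
    constructor
    · linarith [hF0_lip x y]
    · rw [norm_sub_rev]
      linarith [hF0_lip y x]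
  obtain ⟨v₀, hv₀s, hv₀min⟩ := (isCompact_sphere (0 : EuclideanSpace ℝ (Fin n)) 1).exists_isMinOn
    ⟨u0, hu0⟩ hF0_cont.continuousOn
  set m := F 0 v₀ with hm
  have hm_pos : 0 < m := hFpos 0 h0δ v₀ hv₀s
  have hm_le : ∀ v ∈ sphere (0 : EuclideanSpace ℝ (Fin n)) 1, m ≤ F 0 v := fun v hv => hv₀min hv
  -- bound on g, constant C
  obtain ⟨G, hG⟩ := hΘ_cpt.exists_bound_of_continuousOn hg
  set C := G + 1 with hC
  have hCpos : 0 < C := by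
    have h1 := hG w0 hw0
    have h2 := norm_nonneg (g w0)
    rw [hC]; linarith
  -- δ₀
  obtain ⟨δ', hδ'pos, hδ'⟩ := hlog 1 one_pos
  set δ₀ := min δ' (δ/2) with hδ₀
  have hδ₀pos : 0 < δ₀ := lt_min hδ'pos (by linarith)
  have hδ₀δ : δ₀ < δ := lt_of_le_of_lt (min_le_right _ _) (by linarith)
  have hsIoo : ∀ s : ℝ, |s| < δ₀ → s ∈ Set.Ioo (-δ) δ := by
    intro s hs
    have := abs_lt.mp (hs.trans hδ₀δ)
    exact ⟨this.1, this.2⟩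
  -- ratio estimates
  have hratio : ∀ s : ℝ, |s| < δ₀ → ∀ w ∈ Θ,
      ρ s w ≤ Real.exp (C * |s|) * ρ 0 w ∧ ρ 0 w ≤ Real.exp (C * |s|) * ρ s w := by
    intro s hs w hw
    rcases eq_or_ne s 0 with rfl | hs0
    · norm_num
    · have h1 := hδ' s (hs.trans_le (min_le_left _ _)) hs0 w hw
      have hgw : |g w| ≤ G := by simpa [Real.norm_eq_abs] using hG w hw
      have hsg : |s * g w| ≤ G * |s| := by
        rw [abs_mul, mul_comm]
        exact mul_le_mul_of_nonneg_right hgw (abs_nonneg s)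
      have h2 : |Real.log (ρ s w) - Real.log (ρ 0 w)| ≤ C * |s| := by
        have h3 : |Real.log (ρ s w) - Real.log (ρ 0 w)| ≤
            |Real.log (ρ s w) - Real.log (ρ 0 w) - s * g w| + |s * g w| := by
          have := abs_add_le (Real.log (ρ s w) - Real.log (ρ 0 w) - s * g w) (s * g w)
          simpa using this
        rw [hC]; nlinarith [abs_nonneg s]
      have hρs_pos := hρ_pos s (hsIoo s hs) w hw
      have hρ0_pos := hρ_pos 0 h0δ w hw
      have habs := abs_le.mp h2
      constructor
      · calc ρ s w = Real.exp (Real.log (ρ s w)) := (Real.exp_log hρs_pos).symm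
          _ ≤ Real.exp (Real.log (ρ 0 w) + C * |s|) := Real.exp_le_exp.mpr (by linarith [habs.2])
          _ = Real.exp (C * |s|) * ρ 0 w := by rw [Real.exp_add, Real.exp_log hρ0_pos]; ring
      · calc ρ 0 w = Real.exp (Real.log (ρ 0 w)) := (Real.exp_log hρ0_pos).symm
          _ ≤ Real.exp (Real.log (ρ s w) + C * |s|) := Real.exp_le_exp.mpr (by linarith [habs.1])
          _ = Real.exp (C * |s|) * ρ s w := by rw [Real.exp_add, Real.exp_log hρs_pos]; ring
  -- sandwich for F
  have hsand : ∀ s : ℝ, |s| < δ₀ → ∀ v ∈ sphere (0 : EuclideanSpace ℝ (Fin n)) 1,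
      F 0 v ≤ Real.exp (C * |s|) * F s v ∧ F s v ≤ Real.exp (C * |s|) * F 0 v := by
    intro s hs v hv
    have hsI := hsIoo s hs
    constructor
    · rw [hFdef 0 v]
      apply csSup_le (hΘ_ne.image _)
      rintro t ⟨w, hw, rfl⟩
      show ρ 0 w * ⟪v, w⟫_ℝ ≤ Real.exp (C * |s|) * F s v
      rcases le_or_gt 0 (⟪v, w⟫_ℝ) with hin | hin
      · calc ρ 0 w * ⟪v, w⟫_ℝ ≤ (Real.exp (C * |s|) * ρ s w) * ⟪v, w⟫_ℝ :=
              mul_le_mul_of_nonneg_right (hratio s hs w hw).2 hin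
          _ = Real.exp (C * |s|) * (ρ s w * ⟪v, w⟫_ℝ) := by ring
          _ ≤ Real.exp (C * |s|) * F s v :=
              mul_le_mul_of_nonneg_left (hle_F s hsI v w hw) (Real.exp_nonneg _)
      · have ha : ρ 0 w * ⟪v, w⟫_ℝ < 0 := mul_neg_of_pos_of_neg (hρ_pos 0 h0δ w hw) hin
        have hb : 0 < Real.exp (C * |s|) * F s v := mul_pos (Real.exp_pos _) (hFpos s hsI v hv)
        linarith
    · rw [hFdef s v]
      apply csSup_le (hΘ_ne.image _)
      rintro t ⟨w, hw, rfl⟩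
      show ρ s w * ⟪v, w⟫_ℝ ≤ Real.exp (C * |s|) * F 0 v
      rcases le_or_gt 0 (⟪v, w⟫_ℝ) with hin | hin
      · calc ρ s w * ⟪v, w⟫_ℝ ≤ (Real.exp (C * |s|) * ρ 0 w) * ⟪v, w⟫_ℝ :=
              mul_le_mul_of_nonneg_right (hratio s hs w hw).1 hin
          _ = Real.exp (C * |s|) * (ρ 0 w * ⟪v, w⟫_ℝ) := by ring
          _ ≤ Real.exp (C * |s|) * F 0 v :=
              mul_le_mul_of_nonneg_left (hle_F 0 h0δ v w hw) (Real.exp_nonneg _)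
      · have ha : ρ s w * ⟪v, w⟫_ℝ < 0 := mul_neg_of_pos_of_neg (hρ_pos s hsI w hw) hin
        have hb : 0 < Real.exp (C * |s|) * F 0 v := mul_pos (Real.exp_pos _) (hFpos 0 h0δ v hv)
        linarith
  -- uniform bounds m', L'
  set L' := Real.exp (C * δ₀) * R with hL'
  set m' := Real.exp (-(C * δ₀)) * m with hm'
  have hm'_pos : 0 < m' := mul_pos (Real.exp_pos _) hm_pos
  have hL'_pos : 0 < L' := mul_pos (Real.exp_pos _) hRpos
  have hFs_mem : ∀ s : ℝ, |s| < δ₀ → ∀ v ∈ sphere (0 : EuclideanSpace ℝ (Fin n)) 1,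
      F s v ∈ Set.Icc m' L' := by
    intro s hs v hv
    have hsI := hsIoo s hs
    have he : Real.exp (C * |s|) ≤ Real.exp (C * δ₀) :=
      Real.exp_le_exp.mpr (mul_le_mul_of_nonneg_left hs.le hCpos.le)
    constructor
    · have h2 : m ≤ Real.exp (C * |s|) * F s v := (hm_le v hv).trans (hsand s hs v hv).1
      have hc : Real.exp (-(C * δ₀)) * Real.exp (C * |s|) ≤ 1 := by
        rw [← Real.exp_add]
        rw [show (1:ℝ) = Real.exp 0 by simp]
        apply Real.exp_le_exp.mpr
        nlinarith [mul_le_mul_of_nonneg_left hs.le hCpos.le]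
      have hFsp := hFpos s hsI v hv
      have s1 : Real.exp (-(C * δ₀)) * m ≤ Real.exp (-(C * δ₀)) * (Real.exp (C * |s|) * F s v) :=
        mul_le_mul_of_nonneg_left h2 (Real.exp_pos _).le
      have s2 : (Real.exp (-(C * δ₀)) * Real.exp (C * |s|)) * F s v ≤ 1 * F s v :=
        mul_le_mul_of_nonneg_right hc hFsp.le
      rw [hm']
      nlinarith [s1, s2]
    · calc F s v ≤ Real.exp (C * |s|) * F 0 v := (hsand s hs v hv).2
        _ ≤ Real.exp (C * δ₀) * R :=
            mul_le_mul he (hF0_le v hv) (hFpos 0 h0δ v hv).le (Real.exp_nonneg _)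
  have hF0_mem : ∀ v ∈ sphere (0 : EuclideanSpace ℝ (Fin n)) 1, F 0 v ∈ Set.Icc m' L' := by
    intro v hv
    constructor
    · have h1 : Real.exp (-(C * δ₀)) ≤ 1 := by
        rw [Real.exp_le_one_iff]
        nlinarith
      have h2 : m' ≤ m := by
        rw [hm']
        nlinarith [hm_pos]
      exact h2.trans (hm_le v hv)
    · refine (hF0_le v hv).trans ?_
      rw [hL']
      nlinarith [Real.one_le_exp (show (0:ℝ) ≤ C * δ₀ by positivity), hRpos]
  -- closeness estimate
  set M1 := R * C * Real.exp (C * δ₀) with hM1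
  have hM1_pos : 0 < M1 := by positivity
  have hclose : ∀ s : ℝ, |s| < δ₀ → ∀ v ∈ sphere (0 : EuclideanSpace ℝ (Fin n)) 1,
      |F s v - F 0 v| ≤ M1 * |s| := by
    intro s hs v hv
    set t := C * |s| with ht
    have ht0 : 0 ≤ t := by positivity
    have htδ : t ≤ C * δ₀ := mul_le_mul_of_nonneg_left hs.le hCpos.le
    have hInv : Real.exp (-t) * Real.exp t = 1 := by rw [← Real.exp_add]; simp
    have hexp1 : Real.exp t - 1 ≤ t * Real.exp t := by
      nlinarith [Real.add_one_le_exp (-t), Real.exp_pos t]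
    have hexp2 : 1 - Real.exp (-t) ≤ t := by linarith [Real.add_one_le_exp (-t)]
    have h1 := (hsand s hs v hv).2
    have h2 := (hsand s hs v hv).1
    have hF0v_pos := hFpos 0 h0δ v hv
    have hF0v_le := hF0_le v hv
    have hexpt_le : Real.exp t ≤ Real.exp (C * δ₀) := Real.exp_le_exp.mpr htδ
    have e0 : 1 ≤ Real.exp t := Real.one_le_exp ht0
    rw [abs_sub_le_iff]
    constructor
    · have s1 : F s v - F 0 v ≤ (Real.exp t - 1) * F 0 v := by nlinarith [h1]
      have s2 : (Real.exp t - 1) * F 0 v ≤ (Real.exp t - 1) * R :=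
        mul_le_mul_of_nonneg_left hF0v_le (by linarith)
      have s3 : (Real.exp t - 1) * R ≤ (t * Real.exp t) * R :=
        mul_le_mul_of_nonneg_right hexp1 hRpos.le
      have s4 : (t * Real.exp t) * R ≤ (t * Real.exp (C * δ₀)) * R :=
        mul_le_mul_of_nonneg_right (mul_le_mul_of_nonneg_left hexpt_le ht0) hRpos.le
      have s5 : (t * Real.exp (C * δ₀)) * R = M1 * |s| := by rw [ht, hM1]; ring
      linarith
    · have s1 : Real.exp (-t) * F 0 v ≤ F s v := by
        nlinarith [mul_le_mul_of_nonneg_left h2 (Real.exp_pos (-t)).le, hInv]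
      have s2 : F 0 v - F s v ≤ (1 - Real.exp (-t)) * F 0 v := by nlinarith [s1]
      have s3 : (1 - Real.exp (-t)) * F 0 v ≤ t * F 0 v :=
        mul_le_mul_of_nonneg_right hexp2 hF0v_pos.le
      have s4 : t * F 0 v ≤ t * R := mul_le_mul_of_nonneg_left hF0v_le ht0
      have s5 : t * R ≤ M1 * |s| := by
        rw [ht, hM1]
        have h6 : C * |s| * R * 1 ≤ C * |s| * R * Real.exp (C * δ₀) :=
          mul_le_mul_of_nonneg_left (Real.one_le_exp (by positivity)) (by positivity)
        nlinarith [h6]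
      linarith
  -- Lipschitz bound for rpow on [m', L']
  set K := |q| * max (m' ^ (q-1)) (L' ^ (q-1)) with hKdef
  have hK0 : 0 ≤ K :=
    mul_nonneg (abs_nonneg _) (le_trans (Real.rpow_nonneg hm'_pos.le _) (le_max_left _ _))
  have hlip : ∀ x ∈ Set.Icc m' L', ∀ y ∈ Set.Icc m' L', |x ^ q - y ^ q| ≤ K * |x - y| := by
    intro x hx y hy
    have hderiv : ∀ z ∈ Set.Icc m' L',
        HasDerivWithinAt (fun u : ℝ => u ^ q) ((fun z : ℝ => q * z ^ (q-1)) z)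
          (Set.Icc m' L') z := by
      intro z hz
      exact (Real.hasDerivAt_rpow_const
        (Or.inl (ne_of_gt (lt_of_lt_of_le hm'_pos hz.1)))).hasDerivWithinAt
    have hbound : ∀ z ∈ Set.Icc m' L', ‖(fun z : ℝ => q * z ^ (q-1)) z‖ ≤ K := by
      intro z hz
      have hz0 : 0 < z := lt_of_lt_of_le hm'_pos hz.1
      simp only []
      rw [Real.norm_eq_abs, abs_mul, abs_of_nonneg (Real.rpow_nonneg hz0.le _)]
      rw [hKdef]
      apply mul_le_mul_of_nonneg_left ?_ (abs_nonneg q)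
      rcases le_or_gt 0 (q - 1) with hq | hq
      · exact le_trans (Real.rpow_le_rpow hz0.le hz.2 hq) (le_max_right _ _)
      · exact le_trans (Real.rpow_le_rpow_of_nonpos hm'_pos hz.1 hq.le)
          (le_max_left _ _)
    have := Convex.norm_image_sub_le_of_norm_hasDerivWithin_le hderiv hbound
      (convex_Icc m' L') hy hx
    simpa [Real.norm_eq_abs] using this
  -- conclusion
  refine ⟨δ₀, ⟨hδ₀pos, hδ₀δ⟩, M1 * K + 1, ?_, ?_⟩
  · nlinarith [mul_nonneg hM1_pos.le hK0]
  · intro v hv s hs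
    rw [hsupp s (hsIoo s hs) v, hsupp 0 h0δ v]
    have h1 := hlip (F s v) (hFs_mem s hs v hv) (F 0 v) (hF0_mem v hv)
    have h2 := hclose s hs v hv
    calc |F s v ^ q - F 0 v ^ q| ≤ K * |F s v - F 0 v| := h1
      _ ≤ K * (M1 * |s|) := mul_le_mul_of_nonneg_left h2 hK0
      _ ≤ (M1 * K + 1) * |s| := by nlinarith [abs_nonneg s, hK0, hM1_pos]
end
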